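/- arXiv:0903.2955 — 6 statements merged into one kernel-verified Lean document; each statement's English description precedes it below -/
import Mathlib

section
/- Let χ be a Dirichlet character of conductor d, and let T_k(χ,n) = Σ_{ℓ=0}^{n} χ(ℓ) ℓ^k. Then for all positive integers w₁, w₂, d and every ℓ ≥ 0 and any x: Σ_{i=0}^{ℓ} (ℓ choose i) B_{i,χ}(w₂ x) T_{ℓ-i}(χ, d w₁ − 1) w₁^{i-1} w₂^{ℓ-i} = Σ_{i=0}^{ℓ} (ℓ choose i) B_{i,χ}(w₁ x) T_{ℓ-i}(χ, d w₂ − 1) w₂^{i-1} w₁^{ℓ-i}. (Equivalently, after multiplying both sides by w₁ w₂, the identity holds with exponents i and ℓ-i+1 appropriately adjusted.) -/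
open Finset

/-- Generalized Bernoulli polynomial attached to a Dirichlet character, via the
standard closed formula `B_{n,χ}(x) = d^{n-1} ∑_{a<d} χ(a) B_n((a+x)/d)` which is
equivalent to the generating function definition
`∑_{a<d} χ(a) t e^{at} e^{xt}/(e^{dt}-1) = ∑ B_{n,χ}(x) tⁿ/n!`. -/
noncomputable def genBernoulliPoly {d : ℕ} (χ : DirichletCharacter ℂ d) (n : ℕ) (x : ℂ) : ℂ :=
  (d : ℂ) ^ ((n : ℤ) - 1) *
    ∑ a ∈ Finset.range d, χ (a : ZMod d) * Polynomial.aeval (((a : ℂ) + x) / d) (Polynomial.bernoulli n)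

/-- Generalized Bernoulli number `B_{n,χ} = B_{n,χ}(0)`. -/
noncomputable def genBernoulli {d : ℕ} (χ : DirichletCharacter ℂ d) (n : ℕ) : ℂ :=
  genBernoulliPoly χ n 0
/-- Character power sum `T_k(χ, n) = ∑_{ℓ=0}^{n} χ(ℓ) ℓ^k`. -/
noncomputable def charPowSum {d : ℕ} (χ : DirichletCharacter ℂ d) (k n : ℕ) : ℂ :=
  ∑ ℓ ∈ Finset.range (n + 1), χ (ℓ : ZMod d) * (ℓ : ℂ) ^ k

open PowerSeries

/-- EGF of the generalized Bernoulli polynomials. -/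
noncomputable def Gser {d : ℕ} (χ : DirichletCharacter ℂ d) (c : ℂ) : PowerSeries ℂ :=
  PowerSeries.mk fun n => genBernoulliPoly χ n c / Nat.factorial n

/-- EGF of the character power sums up to `d*w - 1`. -/
noncomputable def Hser {d : ℕ} (χ : DirichletCharacter ℂ d) (w : ℕ) : PowerSeries ℂ :=
  PowerSeries.mk fun k => charPowSum χ k (d * w - 1) / Nat.factorial k

/-- `Φ = ∑_{a<d} χ(a) e^{at}`. -/
noncomputable def Phi {d : ℕ} (χ : DirichletCharacter ℂ d) : PowerSeries ℂ :=
  ∑ a ∈ Finset.range d, PowerSeries.C (χ (a : ZMod d)) * rescale (a : ℂ) (PowerSeries.exp ℂ)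

lemma Gser_eq {d : ℕ} (hd : d ≠ 0) (χ : DirichletCharacter ℂ d) (c : ℂ) :
    Gser χ c = PowerSeries.C ((d : ℂ))⁻¹ *
      ∑ a ∈ Finset.range d, PowerSeries.C (χ (a : ZMod d)) *
        rescale (d : ℂ) (PowerSeries.mk fun n =>
          Polynomial.aeval (((a : ℂ) + c) / d) ((1 / (Nat.factorial n) : ℚ) • Polynomial.bernoulli n)) := by
  have hdC : (d : ℂ) ≠ 0 := Nat.cast_ne_zero.mpr hd
  ext n
  have hs : ∀ a : ℕ, (Polynomial.aeval (((a : ℂ) + c) / d) ((1 / (Nat.factorial n) : ℚ) • Polynomial.bernoulli n))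
      = (Polynomial.aeval (((a : ℂ) + c) / d) (Polynomial.bernoulli n)) / Nat.factorial n := by
    intro a
    rw [map_smul, Rat.smul_def]
    push_cast
    ring
  simp only [Gser, coeff_mk, map_sum, PowerSeries.coeff_C_mul, coeff_rescale, hs]
  have hz : (d : ℂ) ^ ((n : ℤ) - 1) = (d : ℂ) ^ n * (d : ℂ)⁻¹ := by
    rw [zpow_sub₀ hdC, zpow_natCast, zpow_one, div_eq_mul_inv]
  rw [genBernoulliPoly, hz]
  simp only [Finset.mul_sum, Finset.sum_div]
  exact Finset.sum_congr rfl fun a _ => by ring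

lemma Gser_mul {d : ℕ} (hd : d ≠ 0) (χ : DirichletCharacter ℂ d) (c : ℂ) :
    Gser χ c * (rescale (d : ℂ) (PowerSeries.exp ℂ) - 1) =
      PowerSeries.X * rescale c (PowerSeries.exp ℂ) * Phi χ := by
  have hdC : (d : ℂ) ≠ 0 := Nat.cast_ne_zero.mpr hd
  rw [Gser_eq hd χ c]
  have h1 : rescale (d : ℂ) (PowerSeries.exp ℂ) - 1 = rescale (d : ℂ) (PowerSeries.exp ℂ - 1) := by
    rw [map_sub, map_one]
  rw [h1, mul_assoc, Finset.sum_mul]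
  have h2 : ∀ a ∈ Finset.range d,
      (PowerSeries.C (χ (a : ZMod d)) *
        rescale (d : ℂ) (PowerSeries.mk fun n =>
          Polynomial.aeval (((a : ℂ) + c) / d) ((1 / (Nat.factorial n) : ℚ) • Polynomial.bernoulli n))) *
        rescale (d : ℂ) (PowerSeries.exp ℂ - 1)
      = PowerSeries.C (χ (a : ZMod d)) * (PowerSeries.C (d : ℂ) *
          (PowerSeries.X * rescale c (PowerSeries.exp ℂ) * rescale (a : ℂ) (PowerSeries.exp ℂ))) := by
    intro a _
    rw [mul_assoc, ← map_mul, Polynomial.bernoulli_generating_function, map_mul, rescale_X,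
      rescale_rescale]
    have hdc : ((a : ℂ) + c) / d * d = (a : ℂ) + c := div_mul_cancel₀ _ hdC
    rw [hdc, ← exp_mul_exp_eq_exp_add]
    ring
  rw [Finset.sum_congr rfl h2]
  simp only [Phi, Finset.mul_sum]
  refine Finset.sum_congr rfl fun a _ => ?_
  have hC : (PowerSeries.C) ((d : ℂ))⁻¹ * (PowerSeries.C) ((d : ℂ)) = 1 := by
    rw [← map_mul, inv_mul_cancel₀ hdC, map_one]
  calc (PowerSeries.C) ((d : ℂ))⁻¹ * (PowerSeries.C (χ (a : ZMod d)) * (PowerSeries.C (d : ℂ) *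
          (PowerSeries.X * rescale c (PowerSeries.exp ℂ) * rescale (a : ℂ) (PowerSeries.exp ℂ))))
      = ((PowerSeries.C) ((d : ℂ))⁻¹ * (PowerSeries.C) ((d : ℂ))) *
          (PowerSeries.C (χ (a : ZMod d)) *
          (PowerSeries.X * rescale c (PowerSeries.exp ℂ) * rescale (a : ℂ) (PowerSeries.exp ℂ))) := by
        ring
    _ = _ := by rw [hC]; ring

lemma sum_range_mul_eq {M : Type*} [AddCommMonoid M] (d w : ℕ) (f : ℕ → M) :
    ∑ m ∈ Finset.range (d * w), f m = ∑ j ∈ Finset.range w, ∑ a ∈ Finset.range d, f (d * j + a) := by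
  induction w with
  | zero => simp
  | succ n ih => rw [Nat.mul_succ, Finset.sum_range_add, ih, Finset.sum_range_succ]

lemma Hser_eq {d : ℕ} (hd : d ≠ 0) (χ : DirichletCharacter ℂ d) (w : ℕ) (hw : w ≠ 0) :
    Hser χ w = (∑ j ∈ Finset.range w, (rescale (d : ℂ) (PowerSeries.exp ℂ)) ^ j) * Phi χ := by
  have h0 : Hser χ w = ∑ m ∈ Finset.range (d * w),
      PowerSeries.C (χ (m : ZMod d)) * rescale (m : ℂ) (PowerSeries.exp ℂ) := by
    ext k
    have hdw : d * w - 1 + 1 = d * w :=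
      Nat.succ_pred_eq_of_pos (Nat.mul_pos (Nat.pos_of_ne_zero hd) (Nat.pos_of_ne_zero hw))
    simp only [Hser, coeff_mk, charPowSum, hdw, map_sum, PowerSeries.coeff_C_mul, coeff_rescale,
      coeff_exp]
    rw [Finset.sum_div]
    refine Finset.sum_congr rfl fun m _ => ?_
    have hmap : (algebraMap ℚ ℂ) (1 / (Nat.factorial k : ℚ)) = ((Nat.factorial k : ℂ))⁻¹ := by
      rw [map_div₀, map_one, map_natCast, one_div]
    rw [hmap]
    ring
  rw [h0, sum_range_mul_eq d w]
  have h2 : ∀ j ∈ Finset.range w,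
      (∑ a ∈ Finset.range d, PowerSeries.C (χ ((d * j + a : ℕ) : ZMod d)) *
        rescale ((d * j + a : ℕ) : ℂ) (PowerSeries.exp ℂ))
      = (rescale (d : ℂ) (PowerSeries.exp ℂ)) ^ j *
          ∑ a ∈ Finset.range d, PowerSeries.C (χ (a : ZMod d)) *
            rescale (a : ℂ) (PowerSeries.exp ℂ) := by
    intro j _
    rw [Finset.mul_sum]
    refine Finset.sum_congr rfl fun a _ => ?_
    have hχ : ((d * j + a : ℕ) : ZMod d) = ((a : ℕ) : ZMod d) := by
      push_cast [ZMod.natCast_self]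
      ring
    have hcast : ((d * j + a : ℕ) : ℂ) = (d : ℂ) * (j : ℂ) + (a : ℂ) := by push_cast; ring
    have hg : (rescale (d : ℂ) (PowerSeries.exp ℂ)) ^ j
        = rescale ((d : ℂ) * (j : ℂ)) (PowerSeries.exp ℂ) := by
      rw [← map_pow, exp_pow_eq_rescale_exp, rescale_rescale, mul_comm]
    rw [hχ, hcast, ← exp_mul_exp_eq_exp_add, hg]
    ring
  rw [Finset.sum_congr rfl h2, ← Finset.sum_mul]
  rfl

lemma Hser_mul {d : ℕ} (hd : d ≠ 0) (χ : DirichletCharacter ℂ d) (w : ℕ) (hw : w ≠ 0) :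
    Hser χ w * (rescale (d : ℂ) (PowerSeries.exp ℂ) - 1) =
      Phi χ * (rescale ((d : ℂ) * (w : ℂ)) (PowerSeries.exp ℂ) - 1) := by
  rw [Hser_eq hd χ w hw]
  have hgw : (rescale (d : ℂ) (PowerSeries.exp ℂ)) ^ w
      = rescale ((d : ℂ) * (w : ℂ)) (PowerSeries.exp ℂ) := by
    rw [← map_pow, exp_pow_eq_rescale_exp, rescale_rescale, mul_comm]
  calc (∑ j ∈ Finset.range w, (rescale (d : ℂ) (PowerSeries.exp ℂ)) ^ j) * Phi χ *
        (rescale (d : ℂ) (PowerSeries.exp ℂ) - 1)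
      = ((∑ j ∈ Finset.range w, (rescale (d : ℂ) (PowerSeries.exp ℂ)) ^ j) *
          (rescale (d : ℂ) (PowerSeries.exp ℂ) - 1)) * Phi χ := by ring
    _ = ((rescale (d : ℂ) (PowerSeries.exp ℂ)) ^ w - 1) * Phi χ := by rw [geom_sum_mul]
    _ = _ := by rw [hgw]; ring

lemma main_ps {d : ℕ} (hd : d ≠ 0) (χ : DirichletCharacter ℂ d) (w₁ w₂ : ℕ)
    (hw₁ : w₁ ≠ 0) (hw₂ : w₂ ≠ 0) (x : ℂ) :
    PowerSeries.C (w₂ : ℂ) * (rescale (w₁ : ℂ) (Gser χ ((w₂ : ℂ) * x)) *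
      rescale (w₂ : ℂ) (Hser χ w₁)) =
    PowerSeries.C (w₁ : ℂ) * (rescale (w₂ : ℂ) (Gser χ ((w₁ : ℂ) * x)) *
      rescale (w₁ : ℂ) (Hser χ w₂)) := by
  have hdC : (d : ℂ) ≠ 0 := Nat.cast_ne_zero.mpr hd
  set E := PowerSeries.exp ℂ with hE
  have hD : ∀ w : ℕ, w ≠ 0 → (rescale ((d : ℂ) * (w : ℂ)) E - 1) ≠ 0 := by
    intro w hw h
    have h1 := congrArg (PowerSeries.coeff 1) h
    rw [map_sub, coeff_rescale, coeff_exp, PowerSeries.coeff_one, map_zero] at h1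
    simp at h1
    rcases h1 with h1 | h1
    · exact hd h1
    · exact hw h1
  -- auxiliary identities
  have hA : ∀ (u : ℕ) (c : ℂ), rescale (u : ℂ) (Gser χ c) * (rescale ((d : ℂ) * (u : ℂ)) E - 1)
      = PowerSeries.C (u : ℂ) * PowerSeries.X * rescale (c * (u : ℂ)) E *
          rescale (u : ℂ) (Phi χ) := by
    intro u c
    have e1 : rescale ((d : ℂ) * (u : ℂ)) E - 1 = rescale (u : ℂ) (rescale (d : ℂ) E - 1) := by
      rw [map_sub, map_one, rescale_rescale]
    rw [e1, ← map_mul, Gser_mul hd χ c, map_mul, map_mul, rescale_X, rescale_rescale]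
  have hB : ∀ (u v : ℕ), v ≠ 0 →
      rescale (u : ℂ) (Hser χ v) * (rescale ((d : ℂ) * (u : ℂ)) E - 1)
      = rescale (u : ℂ) (Phi χ) * (rescale ((d : ℂ) * (v : ℂ) * (u : ℂ)) E - 1) := by
    intro u v hv
    have e1 : rescale ((d : ℂ) * (u : ℂ)) E - 1 = rescale (u : ℂ) (rescale (d : ℂ) E - 1) := by
      rw [map_sub, map_one, rescale_rescale]
    rw [e1, ← map_mul, Hser_mul hd χ v hv, map_mul, map_sub, map_one, rescale_rescale]
  refine mul_right_cancel₀ (mul_ne_zero (hD w₁ hw₁) (hD w₂ hw₂)) ?_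
  calc PowerSeries.C (w₂ : ℂ) * (rescale (w₁ : ℂ) (Gser χ ((w₂ : ℂ) * x)) *
        rescale (w₂ : ℂ) (Hser χ w₁)) * ((rescale ((d : ℂ) * (w₁ : ℂ)) E - 1) * (rescale ((d : ℂ) * (w₂ : ℂ)) E - 1))
      = PowerSeries.C (w₂ : ℂ) * ((rescale (w₁ : ℂ) (Gser χ ((w₂ : ℂ) * x)) * (rescale ((d : ℂ) * (w₁ : ℂ)) E - 1)) *
          (rescale (w₂ : ℂ) (Hser χ w₁) * (rescale ((d : ℂ) * (w₂ : ℂ)) E - 1))) := by ring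
    _ = PowerSeries.C (w₂ : ℂ) *
        ((PowerSeries.C (w₁ : ℂ) * PowerSeries.X * rescale ((w₂ : ℂ) * x * (w₁ : ℂ)) E *
          rescale (w₁ : ℂ) (Phi χ)) *
         (rescale (w₂ : ℂ) (Phi χ) * (rescale ((d : ℂ) * (w₁ : ℂ) * (w₂ : ℂ)) E - 1))) := by
        rw [hA w₁ ((w₂ : ℂ) * x), hB w₂ w₁ hw₁]
    _ = PowerSeries.C (w₁ : ℂ) *
        ((PowerSeries.C (w₂ : ℂ) * PowerSeries.X * rescale ((w₁ : ℂ) * x * (w₂ : ℂ)) E *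
          rescale (w₂ : ℂ) (Phi χ)) *
         (rescale (w₁ : ℂ) (Phi χ) * (rescale ((d : ℂ) * (w₂ : ℂ) * (w₁ : ℂ)) E - 1))) := by
        rw [show (w₂ : ℂ) * x * (w₁ : ℂ) = (w₁ : ℂ) * x * (w₂ : ℂ) by ring,
          show (d : ℂ) * (w₁ : ℂ) * (w₂ : ℂ) = (d : ℂ) * (w₂ : ℂ) * (w₁ : ℂ) by ring]
        ring
    _ = PowerSeries.C (w₁ : ℂ) * (rescale (w₂ : ℂ) (Gser χ ((w₁ : ℂ) * x)) *
        rescale (w₁ : ℂ) (Hser χ w₂)) * ((rescale ((d : ℂ) * (w₁ : ℂ)) E - 1) *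
        (rescale ((d : ℂ) * (w₂ : ℂ)) E - 1)) := by
        rw [← hA w₂ ((w₁ : ℂ) * x), ← hB w₁ w₂ hw₂]
        ring

theorem stmt3 {d : ℕ} (hd : 0 < d) (χ : DirichletCharacter ℂ d)
    (w₁ w₂ : ℕ) (hw₁ : 0 < w₁) (hw₂ : 0 < w₂) (ℓ : ℕ) (x : ℂ) :
    ∑ i ∈ Finset.range (ℓ + 1), (ℓ.choose i : ℂ) * genBernoulliPoly χ i ((w₂ : ℂ) * x) *
        charPowSum χ (ℓ - i) (d * w₁ - 1) * (w₁ : ℂ) ^ ((i : ℤ) - 1) * (w₂ : ℂ) ^ (ℓ - i) =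
      ∑ i ∈ Finset.range (ℓ + 1), (ℓ.choose i : ℂ) * genBernoulliPoly χ i ((w₁ : ℂ) * x) *
        charPowSum χ (ℓ - i) (d * w₂ - 1) * (w₂ : ℂ) ^ ((i : ℤ) - 1) * (w₁ : ℂ) ^ (ℓ - i) := by
  have hd' : d ≠ 0 := hd.ne'
  have hw₁' : w₁ ≠ 0 := hw₁.ne'
  have hw₂' : w₂ ≠ 0 := hw₂.ne'
  have hw₁C : (w₁ : ℂ) ≠ 0 := Nat.cast_ne_zero.mpr hw₁'
  have hw₂C : (w₂ : ℂ) ≠ 0 := Nat.cast_ne_zero.mpr hw₂'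
  have hps := main_ps hd' χ w₁ w₂ hw₁' hw₂' x
  have hcoeff := congrArg (PowerSeries.coeff ℓ) hps
  rw [PowerSeries.coeff_C_mul, PowerSeries.coeff_C_mul] at hcoeff
  have hP : ∀ (c : ℂ) (u v w : ℕ),
      (PowerSeries.coeff ℓ) (rescale (u : ℂ) (Gser χ c) * rescale (v : ℂ) (Hser χ w))
      = ∑ i ∈ Finset.range (ℓ + 1),
          ((u : ℂ) ^ i * (genBernoulliPoly χ i c / Nat.factorial i)) *
          ((v : ℂ) ^ (ℓ - i) * (charPowSum χ (ℓ - i) (d * w - 1) / Nat.factorial (ℓ - i))) := by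
    intro c u v w
    rw [PowerSeries.coeff_mul, Finset.Nat.sum_antidiagonal_eq_sum_range_succ_mk]
    simp only [coeff_rescale, Gser, Hser, coeff_mk]
  have claim : ∀ (c : ℂ) (w u v : ℕ), (u : ℂ) ≠ 0 →
      (∑ i ∈ Finset.range (ℓ + 1), (ℓ.choose i : ℂ) * genBernoulliPoly χ i c *
        charPowSum χ (ℓ - i) (d * w - 1) * (u : ℂ) ^ ((i : ℤ) - 1) * (v : ℂ) ^ (ℓ - i)) *
        ((u : ℂ) * (v : ℂ))
      = (Nat.factorial ℓ : ℂ) * ((v : ℂ) * ∑ i ∈ Finset.range (ℓ + 1),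
          ((u : ℂ) ^ i * (genBernoulliPoly χ i c / Nat.factorial i)) *
          ((v : ℂ) ^ (ℓ - i) * (charPowSum χ (ℓ - i) (d * w - 1) / Nat.factorial (ℓ - i)))) := by
    intro c w u v hu
    rw [Finset.sum_mul, Finset.mul_sum, Finset.mul_sum]
    refine Finset.sum_congr rfl fun i hi => ?_
    have hi' : i ≤ ℓ := Nat.lt_succ_iff.mp (Finset.mem_range.mp hi)
    have hf1 : ((Nat.factorial i : ℂ)) ≠ 0 := Nat.cast_ne_zero.mpr (Nat.factorial_ne_zero i)
    have hf2 : ((Nat.factorial (ℓ - i) : ℂ)) ≠ 0 := Nat.cast_ne_zero.mpr (Nat.factorial_ne_zero (ℓ - i))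
    have hch : (ℓ.choose i : ℂ) = (Nat.factorial ℓ : ℂ) / ((Nat.factorial i : ℂ) * (Nat.factorial (ℓ - i) : ℂ)) :=
      Nat.cast_choose ℂ hi'
    have hzp : (u : ℂ) ^ ((i : ℤ) - 1) = (u : ℂ) ^ i * (u : ℂ)⁻¹ := by
      rw [zpow_sub_one₀ hu, zpow_natCast]
    rw [hch, hzp]
    field_simp
  refine mul_right_cancel₀ (b := (w₁ : ℂ) * (w₂ : ℂ)) (mul_ne_zero hw₁C hw₂C) ?_
  calc (∑ i ∈ Finset.range (ℓ + 1), (ℓ.choose i : ℂ) * genBernoulliPoly χ i ((w₂ : ℂ) * x) *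
        charPowSum χ (ℓ - i) (d * w₁ - 1) * (w₁ : ℂ) ^ ((i : ℤ) - 1) * (w₂ : ℂ) ^ (ℓ - i)) *
        ((w₁ : ℂ) * (w₂ : ℂ))
      = (Nat.factorial ℓ : ℂ) * ((w₂ : ℂ) * (PowerSeries.coeff ℓ)
          (rescale (w₁ : ℂ) (Gser χ ((w₂ : ℂ) * x)) * rescale (w₂ : ℂ) (Hser χ w₁))) := by
        rw [claim ((w₂ : ℂ) * x) w₁ w₁ w₂ hw₁C, hP ((w₂ : ℂ) * x) w₁ w₂ w₁]
    _ = (Nat.factorial ℓ : ℂ) * ((w₁ : ℂ) * (PowerSeries.coeff ℓ)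
          (rescale (w₂ : ℂ) (Gser χ ((w₁ : ℂ) * x)) * rescale (w₁ : ℂ) (Hser χ w₂))) := by
        rw [hcoeff]
    _ = (∑ i ∈ Finset.range (ℓ + 1), (ℓ.choose i : ℂ) * genBernoulliPoly χ i ((w₁ : ℂ) * x) *
        charPowSum χ (ℓ - i) (d * w₂ - 1) * (w₂ : ℂ) ^ ((i : ℤ) - 1) * (w₁ : ℂ) ^ (ℓ - i)) *
        ((w₂ : ℂ) * (w₁ : ℂ)) := by
        rw [claim ((w₁ : ℂ) * x) w₂ w₂ w₁ hw₂C, hP ((w₁ : ℂ) * x) w₂ w₁ w₂]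
    _ = _ := by ring
end

section
/- Let χ be a Dirichlet character of conductor d and T_k(χ,n) = Σ_{ℓ=0}^{n} χ(ℓ) ℓ^k. Then for all positive integers w₁, w₂ and every ℓ ≥ 0: Σ_{i=0}^{ℓ} (ℓ choose i) B_{i,χ} T_{ℓ-i}(χ, d w₁ − 1) w₁^{i-1} w₂^{ℓ-i} = Σ_{i=0}^{ℓ} (ℓ choose i) B_{i,χ} T_{ℓ-i}(χ, d w₂ − 1) w₂^{i-1} w₁^{ℓ-i}. -/
open Finset

noncomputable def E : PowerSeries ℂ := PowerSeries.exp ℂ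
noncomputable def G (x : ℂ) : PowerSeries ℂ :=
  PowerSeries.mk fun n => Polynomial.aeval x ((1 / (n.factorial : ℚ)) • Polynomial.bernoulli n)

lemma Ggen (x : ℂ) : G x * (E - 1) = PowerSeries.X * PowerSeries.rescale x E :=
  by simpa [G, E] using Polynomial.bernoulli_generating_function (A := ℂ) x

lemma geom (m : ℕ) :
    (E - 1) * ∑ j ∈ Finset.range m, PowerSeries.rescale (j : ℂ) E
      = PowerSeries.rescale (m : ℂ) E - 1 := by
  induction m with
  | zero => simp [PowerSeries.rescale_zero, E, PowerSeries.constantCoeff_exp]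
  | succ m ih =>
    rw [Finset.sum_range_succ, mul_add, ih]
    have h : E * PowerSeries.rescale (m : ℂ) E = PowerSeries.rescale ((m : ℂ) + 1) E := by
      have := PowerSeries.exp_mul_exp_eq_exp_add (1 : ℂ) (m : ℂ)
      rw [PowerSeries.rescale_one] at this
      simpa [add_comm, E] using this
    push_cast
    rw [sub_mul, one_mul, ← h]
    ring

lemma hE1 : (E - 1) ≠ 0 := by
  intro h
  have := congrArg (PowerSeries.coeff 1) h
  simp [E, PowerSeries.coeff_exp] at this

lemma hEm (m : ℕ) (hm : m ≠ 0) : PowerSeries.rescale (m : ℂ) E - 1 ≠ 0 := by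
  intro h
  have := congrArg (PowerSeries.coeff 1) h
  simp [E, PowerSeries.coeff_rescale, PowerSeries.coeff_exp] at this
  exact hm (by exact_mod_cast this)

lemma coeff_G (x : ℂ) (k : ℕ) :
    PowerSeries.coeff k (G x) = (1 / (k.factorial : ℂ)) * Polynomial.aeval x (Polynomial.bernoulli k) := by
  simp [G, Polynomial.smul_eq_C_mul, map_mul, Polynomial.aeval_C]

lemma Gmul (x y : ℂ) : G x * PowerSeries.rescale y E = G (x + y) := by
  apply mul_right_cancel₀ hE1
  calc G x * PowerSeries.rescale y E * (E - 1)
      = G x * (E - 1) * PowerSeries.rescale y E := by ring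
    _ = PowerSeries.X * (PowerSeries.rescale x E * PowerSeries.rescale y E) := by
        rw [Ggen]; ring
    _ = PowerSeries.X * PowerSeries.rescale (x + y) E := by
        rw [show (E : PowerSeries ℂ) = PowerSeries.exp ℂ from rfl, PowerSeries.exp_mul_exp_eq_exp_add]
    _ = G (x + y) * (E - 1) := (Ggen (x + y)).symm

lemma add_formula (x y : ℂ) (n : ℕ) :
    ∑ i ∈ Finset.range (n + 1), (n.choose i : ℂ) * Polynomial.aeval x (Polynomial.bernoulli i) * y ^ (n - i)
      = Polynomial.aeval (x + y) (Polynomial.bernoulli n) := by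
  have h := congrArg (PowerSeries.coeff n) (Gmul x y)
  rw [PowerSeries.coeff_mul, Finset.Nat.sum_antidiagonal_eq_sum_range_succ_mk] at h
  simp only [PowerSeries.coeff_rescale, E, PowerSeries.coeff_exp, coeff_G] at h
  have h2 : Polynomial.aeval (x+y) (Polynomial.bernoulli n)
      = (n.factorial : ℂ) * ∑ i ∈ Finset.range (n+1),
        1 / (i.factorial : ℂ) * Polynomial.aeval x (Polynomial.bernoulli i) *
          (y ^ (n - i) * algebraMap ℚ ℂ (1 / (n - i).factorial)) := by
    rw [h]
    have hn : (n.factorial : ℂ) ≠ 0 := by exact_mod_cast n.factorial_ne_zero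
    field_simp
  rw [h2, Finset.mul_sum]
  apply Finset.sum_congr rfl
  intro i hi
  have hin : i ≤ n := Nat.lt_succ_iff.mp (Finset.mem_range.mp hi)
  rw [Nat.cast_choose ℂ hin]
  have h1 : (i.factorial : ℂ) ≠ 0 := by exact_mod_cast i.factorial_ne_zero
  have h2 : ((n - i).factorial : ℂ) ≠ 0 := by exact_mod_cast (n - i).factorial_ne_zero
  push_cast
  field_simp

lemma rescale_X (a : ℂ) : PowerSeries.rescale a PowerSeries.X = PowerSeries.C a * PowerSeries.X := by
  ext n
  simp [PowerSeries.coeff_rescale, PowerSeries.coeff_X, PowerSeries.coeff_C_mul]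

lemma Gsub (x : ℂ) (w : ℕ) :
    G (x + w) - G x = PowerSeries.X * ∑ q ∈ Finset.range w, PowerSeries.rescale (x + q) E := by
  apply mul_right_cancel₀ hE1
  have key : ∀ q : ℕ, PowerSeries.rescale x E * PowerSeries.rescale (q : ℂ) E
      = PowerSeries.rescale (x + q) E := by
    intro q
    rw [show (E : PowerSeries ℂ) = PowerSeries.exp ℂ from rfl, PowerSeries.exp_mul_exp_eq_exp_add]
  calc (G (x + w) - G x) * (E - 1)
      = G (x + w) * (E - 1) - G x * (E - 1) := by ring
    _ = PowerSeries.X * PowerSeries.rescale (x + w) E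
        - PowerSeries.X * PowerSeries.rescale x E := by rw [Ggen, Ggen]
    _ = PowerSeries.X * PowerSeries.rescale x E * (PowerSeries.rescale (w : ℂ) E - 1) := by
        rw [← key w]; ring
    _ = PowerSeries.X * PowerSeries.rescale x E *
        ((E - 1) * ∑ q ∈ Finset.range w, PowerSeries.rescale (q : ℂ) E) := by rw [geom]
    _ = (PowerSeries.X * (PowerSeries.rescale x E * ∑ q ∈ Finset.range w, PowerSeries.rescale (q : ℂ) E)) * (E - 1) := by
        ring
    _ = (PowerSeries.X * ∑ q ∈ Finset.range w, PowerSeries.rescale x E * PowerSeries.rescale (q : ℂ) E) * (E - 1) := by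
        rw [Finset.mul_sum]
    _ = (PowerSeries.X * ∑ q ∈ Finset.range w, PowerSeries.rescale (x + q) E) * (E - 1) := by
        simp_rw [key]

lemma powsum (x : ℂ) (w k : ℕ) :
    (k + 1 : ℂ) * ∑ q ∈ Finset.range w, (x + q) ^ k
      = Polynomial.aeval (x + w) (Polynomial.bernoulli (k + 1))
        - Polynomial.aeval x (Polynomial.bernoulli (k + 1)) := by
  have h := congrArg (PowerSeries.coeff (k + 1)) (Gsub x w)
  rw [PowerSeries.coeff_succ_X_mul, map_sub, coeff_G, coeff_G, map_sum] at h
  simp only [PowerSeries.coeff_rescale, E, PowerSeries.coeff_exp] at h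
  have hk : (k.factorial : ℂ) ≠ 0 := by exact_mod_cast k.factorial_ne_zero
  have hk1 : ((k+1).factorial : ℂ) ≠ 0 := by exact_mod_cast (k+1).factorial_ne_zero
  have hfac : ((k+1).factorial : ℂ) = (k+1) * k.factorial := by
    rw [Nat.factorial_succ]; push_cast; ring
  rw [show Polynomial.aeval (x + ↑w) (Polynomial.bernoulli (k + 1))
        - Polynomial.aeval x (Polynomial.bernoulli (k + 1))
      = ((k+1).factorial : ℂ) * (1 / ((k+1).factorial : ℂ) * Polynomial.aeval (x + ↑w) (Polynomial.bernoulli (k + 1))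
        - 1 / ((k+1).factorial : ℂ) * Polynomial.aeval x (Polynomial.bernoulli (k + 1))) by field_simp, h,
    Finset.mul_sum, Finset.mul_sum]
  apply Finset.sum_congr rfl
  intro q _
  rw [hfac]
  have : algebraMap ℚ ℂ (1 / (k.factorial : ℚ)) = 1 / (k.factorial : ℂ) := by
    push_cast [map_div₀]; simp
  rw [this]
  field_simp

lemma raabe_series (m : ℕ) (hm : m ≠ 0) (x : ℂ) :
    ∑ j ∈ Finset.range m, PowerSeries.rescale (m : ℂ) (G ((x + j) / m))
      = PowerSeries.C (m : ℂ) * G x := by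
  have hmC : (m : ℂ) ≠ 0 := Nat.cast_ne_zero.mpr hm
  apply mul_right_cancel₀ (mul_ne_zero (hEm m hm) hE1)
  have hres : PowerSeries.rescale (m : ℂ) (E - 1) = PowerSeries.rescale (m : ℂ) E - 1 := by
    rw [map_sub, map_one]
  have key : ∀ j : ℕ, PowerSeries.rescale (m : ℂ) (G ((x + j) / m)) *
      (PowerSeries.rescale (m : ℂ) E - 1)
      = PowerSeries.C (m : ℂ) * PowerSeries.X *
        (PowerSeries.rescale x E * PowerSeries.rescale (j : ℂ) E) := by
    intro j
    rw [← hres, ← map_mul, Ggen, map_mul, rescale_X, PowerSeries.rescale_rescale,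
      show (x + (j : ℂ)) / m * m = x + j by field_simp,
      show (E : PowerSeries ℂ) = PowerSeries.exp ℂ from rfl, PowerSeries.exp_mul_exp_eq_exp_add]
  calc (∑ j ∈ Finset.range m, PowerSeries.rescale (m : ℂ) (G ((x + j) / m))) *
        ((PowerSeries.rescale (m : ℂ) E - 1) * (E - 1))
      = (∑ j ∈ Finset.range m, PowerSeries.rescale (m : ℂ) (G ((x + j) / m)) *
          (PowerSeries.rescale (m : ℂ) E - 1)) * (E - 1) := by
        rw [Finset.sum_mul, Finset.sum_mul]
        exact Finset.sum_congr rfl fun j _ => by ring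
    _ = (∑ j ∈ Finset.range m, PowerSeries.C (m : ℂ) * PowerSeries.X *
          (PowerSeries.rescale x E * PowerSeries.rescale (j : ℂ) E)) * (E - 1) := by
        simp_rw [key]
    _ = PowerSeries.C (m : ℂ) * PowerSeries.X * PowerSeries.rescale x E *
          ((E - 1) * ∑ j ∈ Finset.range m, PowerSeries.rescale (j : ℂ) E) := by
        rw [Finset.sum_mul, Finset.mul_sum, Finset.mul_sum]
        exact Finset.sum_congr rfl fun j _ => by ring
    _ = PowerSeries.C (m : ℂ) * PowerSeries.X * PowerSeries.rescale x E *
          (PowerSeries.rescale (m : ℂ) E - 1) := by rw [geom]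
    _ = PowerSeries.C (m : ℂ) * (PowerSeries.X * PowerSeries.rescale x E) *
          (PowerSeries.rescale (m : ℂ) E - 1) := by ring
    _ = PowerSeries.C (m : ℂ) * (G x * (E - 1)) * (PowerSeries.rescale (m : ℂ) E - 1) := by
        rw [Ggen]
    _ = PowerSeries.C (m : ℂ) * G x * ((PowerSeries.rescale (m : ℂ) E - 1) * (E - 1)) := by
        ring

lemma raabe (m : ℕ) (hm : m ≠ 0) (x : ℂ) (n : ℕ) :
    (m : ℂ) ^ n * ∑ j ∈ Finset.range m, Polynomial.aeval ((x + j) / m) (Polynomial.bernoulli n)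
      = (m : ℂ) * Polynomial.aeval x (Polynomial.bernoulli n) := by
  have h := congrArg (PowerSeries.coeff n) (raabe_series m hm x)
  rw [map_sum, PowerSeries.coeff_C_mul, coeff_G] at h
  simp only [PowerSeries.coeff_rescale, coeff_G] at h
  have hn : (n.factorial : ℂ) ≠ 0 := by exact_mod_cast n.factorial_ne_zero
  have h2 : (n.factorial : ℂ) * (∑ j ∈ Finset.range m, (m:ℂ) ^ n *
      (1 / (n.factorial : ℂ) * Polynomial.aeval ((x + j) / m) (Polynomial.bernoulli n)))
      = (n.factorial : ℂ) * ((m:ℂ) * (1 / (n.factorial : ℂ) * Polynomial.aeval x (Polynomial.bernoulli n))) := by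
    rw [h]
  rw [Finset.mul_sum] at h2
  calc (m : ℂ) ^ n * ∑ j ∈ Finset.range m, Polynomial.aeval ((x + j) / m) (Polynomial.bernoulli n)
      = ∑ j ∈ Finset.range m, (n.factorial : ℂ) * ((m:ℂ) ^ n *
        (1 / (n.factorial : ℂ) * Polynomial.aeval ((x + j) / m) (Polynomial.bernoulli n))) := by
        rw [Finset.mul_sum]
        exact Finset.sum_congr rfl fun j _ => by field_simp
    _ = (n.factorial : ℂ) * ((m:ℂ) * (1 / (n.factorial : ℂ) * Polynomial.aeval x (Polynomial.bernoulli n))) := h2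
    _ = (m : ℂ) * Polynomial.aeval x (Polynomial.bernoulli n) := by field_simp

lemma genB_eq {d : ℕ} (χ : DirichletCharacter ℂ d) (i : ℕ) :
    genBernoulli χ i = (d:ℂ)^((i:ℤ)-1) *
      ∑ a ∈ Finset.range d, χ (a : ZMod d) * Polynomial.aeval ((a:ℂ)/d) (Polynomial.bernoulli i) := by
  simp [genBernoulli, genBernoulliPoly]

lemma sum_range_mul (d w : ℕ) (f : ℕ → ℂ) :
    ∑ n ∈ Finset.range (d * w), f n = ∑ q ∈ Finset.range w, ∑ b ∈ Finset.range d, f (d * q + b) := by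
  induction w with
  | zero => simp
  | succ w ih =>
    rw [Nat.mul_succ, Finset.sum_range_add, ih, Finset.sum_range_succ]

lemma charPowSum_eq {d : ℕ} (hd : 0 < d) (χ : DirichletCharacter ℂ d) (k w : ℕ) (hw : 0 < w) :
    charPowSum χ k (d * w - 1)
      = ∑ q ∈ Finset.range w, ∑ b ∈ Finset.range d, χ (b : ZMod d) * ((b:ℂ) + d * q) ^ k := by
  rw [charPowSum, Nat.sub_add_cancel (Nat.one_le_iff_ne_zero.mpr (Nat.mul_pos hd hw).ne'), sum_range_mul]
  refine Finset.sum_congr rfl fun q _ => Finset.sum_congr rfl fun b _ => ?_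
  have h1 : ((d * q + b : ℕ) : ZMod d) = (b : ZMod d) := by
    push_cast
    simp [ZMod.natCast_self]
  have h2 : ((d * q + b : ℕ) : ℂ) = (b:ℂ) + d * q := by push_cast; ring
  rw [h1, h2]

lemma expand3 (s t u : Finset ℕ) (K : ℂ) (f : ℕ → ℂ) (g : ℕ → ℕ → ℂ) :
    K * ((∑ a ∈ s, f a) * ∑ q ∈ t, ∑ b ∈ u, g q b)
      = ∑ a ∈ s, ∑ q ∈ t, ∑ b ∈ u, K * f a * g q b := by
  rw [Finset.sum_mul_sum, Finset.mul_sum]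
  refine Finset.sum_congr rfl fun a _ => ?_
  rw [Finset.mul_sum]
  refine Finset.sum_congr rfl fun q _ => ?_
  rw [Finset.mul_sum, Finset.mul_sum]
  exact Finset.sum_congr rfl fun b _ => by ring

lemma main_lemma {d : ℕ} (hd : 0 < d) (χ : DirichletCharacter ℂ d)
    (w w' : ℕ) (hw : 0 < w) (hw' : 0 < w') (ℓ : ℕ) :
    ∑ i ∈ Finset.range (ℓ + 1), (ℓ.choose i : ℂ) * genBernoulli χ i *
        charPowSum χ (ℓ - i) (d * w - 1) * (w : ℂ) ^ ((i : ℤ) - 1) * (w' : ℂ) ^ (ℓ - i)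
      = ((d : ℂ) * w * w') ^ ((ℓ : ℤ) - 1) *
        ∑ a ∈ Finset.range d, ∑ q ∈ Finset.range w, ∑ b ∈ Finset.range d, ∑ r ∈ Finset.range w',
          χ (a : ZMod d) * χ (b : ZMod d) *
            Polynomial.aeval (((a:ℂ) * w + b * w' + d * (q * w' + r * w)) / ((d:ℂ) * w * w'))
              (Polynomial.bernoulli ℓ) := by
  have hdC : (d : ℂ) ≠ 0 := Nat.cast_ne_zero.mpr hd.ne'
  have hwC : (w : ℂ) ≠ 0 := Nat.cast_ne_zero.mpr hw.ne'
  have hw'C : (w' : ℂ) ≠ 0 := Nat.cast_ne_zero.mpr hw'.ne'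
  have hz : ((d : ℂ) * w * w') ^ ((ℓ : ℤ) - 1) = ((d:ℂ) * w * w') ^ ℓ / ((d:ℂ) * w * w') := by
    rw [zpow_sub₀ (mul_ne_zero (mul_ne_zero hdC hwC) hw'C), zpow_natCast, zpow_one]
  calc ∑ i ∈ Finset.range (ℓ + 1), (ℓ.choose i : ℂ) * genBernoulli χ i *
        charPowSum χ (ℓ - i) (d * w - 1) * (w : ℂ) ^ ((i : ℤ) - 1) * (w' : ℂ) ^ (ℓ - i)
      = ∑ i ∈ Finset.range (ℓ + 1), ∑ a ∈ Finset.range d, ∑ q ∈ Finset.range w, ∑ b ∈ Finset.range d,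
          (ℓ.choose i : ℂ) * (d:ℂ) ^ ((i : ℤ) - 1) * (w:ℂ) ^ ((i : ℤ) - 1) * (w':ℂ) ^ (ℓ - i) *
          (χ (a : ZMod d) * Polynomial.aeval ((a:ℂ)/d) (Polynomial.bernoulli i)) *
          (χ (b : ZMod d) * ((b:ℂ) + d * q) ^ (ℓ - i)) := by
        refine Finset.sum_congr rfl fun i _ => ?_
        rw [genB_eq, charPowSum_eq hd χ _ w hw]
        rw [show (ℓ.choose i : ℂ) * ((d:ℂ)^((i:ℤ)-1) *
              ∑ a ∈ Finset.range d, χ (a : ZMod d) * Polynomial.aeval ((a:ℂ)/d) (Polynomial.bernoulli i)) *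
              (∑ q ∈ Finset.range w, ∑ b ∈ Finset.range d, χ (b : ZMod d) * ((b:ℂ) + d * q) ^ (ℓ - i)) *
              (w : ℂ) ^ ((i : ℤ) - 1) * (w' : ℂ) ^ (ℓ - i)
            = ((ℓ.choose i : ℂ) * (d:ℂ) ^ ((i : ℤ) - 1) * (w:ℂ) ^ ((i : ℤ) - 1) * (w':ℂ) ^ (ℓ - i)) *
              ((∑ a ∈ Finset.range d, χ (a : ZMod d) * Polynomial.aeval ((a:ℂ)/d) (Polynomial.bernoulli i)) *
               ∑ q ∈ Finset.range w, ∑ b ∈ Finset.range d, χ (b : ZMod d) * ((b:ℂ) + d * q) ^ (ℓ - i)) by ring,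
          expand3]
    _ = ∑ a ∈ Finset.range d, ∑ q ∈ Finset.range w, ∑ b ∈ Finset.range d, ∑ i ∈ Finset.range (ℓ + 1),
          (ℓ.choose i : ℂ) * (d:ℂ) ^ ((i : ℤ) - 1) * (w:ℂ) ^ ((i : ℤ) - 1) * (w':ℂ) ^ (ℓ - i) *
          (χ (a : ZMod d) * Polynomial.aeval ((a:ℂ)/d) (Polynomial.bernoulli i)) *
          (χ (b : ZMod d) * ((b:ℂ) + d * q) ^ (ℓ - i)) := by
        rw [Finset.sum_comm]
        refine Finset.sum_congr rfl fun a _ => ?_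
        rw [Finset.sum_comm]
        refine Finset.sum_congr rfl fun q _ => ?_
        rw [Finset.sum_comm]
    _ = ∑ a ∈ Finset.range d, ∑ q ∈ Finset.range w, ∑ b ∈ Finset.range d,
          χ (a : ZMod d) * χ (b : ZMod d) * (((d:ℂ) * w) ^ ℓ / ((d:ℂ) * w)) *
          Polynomial.aeval ((a:ℂ)/d + ((b:ℂ) + d * q) * w' / ((d:ℂ) * w)) (Polynomial.bernoulli ℓ) := by
        refine Finset.sum_congr rfl fun a _ => Finset.sum_congr rfl fun q _ =>
          Finset.sum_congr rfl fun b _ => ?_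
        rw [← add_formula ((a:ℂ)/d) (((b:ℂ) + d * q) * w' / ((d:ℂ) * w)) ℓ, Finset.mul_sum]
        refine Finset.sum_congr rfl fun i hi => ?_
        have hin : i ≤ ℓ := Nat.lt_succ_iff.mp (Finset.mem_range.mp hi)
        have hpow : ((d:ℂ) * w) ^ (ℓ - i) * ((d:ℂ) * w) ^ i = ((d:ℂ) * w) ^ ℓ := by
          rw [← pow_add, Nat.sub_add_cancel hin]
        have hzd : (d:ℂ) ^ ((i : ℤ) - 1) = (d:ℂ) ^ i / (d:ℂ) := by
          rw [zpow_sub₀ hdC, zpow_natCast, zpow_one]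
        have hzw : (w:ℂ) ^ ((i : ℤ) - 1) = (w:ℂ) ^ i / (w:ℂ) := by
          rw [zpow_sub₀ hwC, zpow_natCast, zpow_one]
        rw [hzd, hzw, ← hpow]
        set c : ℂ := (b:ℂ) + d * q with hc
        field_simp
        rw [div_pow, mul_pow]
        field_simp
        ring
    _ = ∑ a ∈ Finset.range d, ∑ q ∈ Finset.range w, ∑ b ∈ Finset.range d,
          χ (a : ZMod d) * χ (b : ZMod d) * (((d:ℂ) * w) ^ ℓ / ((d:ℂ) * w)) *
          ((w':ℂ)⁻¹ * ((w':ℂ) ^ ℓ * ∑ r ∈ Finset.range w',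
            Polynomial.aeval ((((a:ℂ)/d + ((b:ℂ) + d * q) * w' / ((d:ℂ) * w)) + r) / w')
              (Polynomial.bernoulli ℓ))) := by
        refine Finset.sum_congr rfl fun a _ => Finset.sum_congr rfl fun q _ =>
          Finset.sum_congr rfl fun b _ => ?_
        have h := raabe w' hw'.ne' ((a:ℂ)/d + ((b:ℂ) + d * q) * w' / ((d:ℂ) * w)) ℓ
        congr 1
        rw [h]
        field_simp
    _ = ((d : ℂ) * w * w') ^ ((ℓ : ℤ) - 1) *
        ∑ a ∈ Finset.range d, ∑ q ∈ Finset.range w, ∑ b ∈ Finset.range d, ∑ r ∈ Finset.range w',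
          χ (a : ZMod d) * χ (b : ZMod d) *
            Polynomial.aeval (((a:ℂ) * w + b * w' + d * (q * w' + r * w)) / ((d:ℂ) * w * w'))
              (Polynomial.bernoulli ℓ) := by
        rw [Finset.mul_sum]
        refine Finset.sum_congr rfl fun a _ => ?_
        rw [Finset.mul_sum]
        refine Finset.sum_congr rfl fun q _ => ?_
        rw [Finset.mul_sum]
        refine Finset.sum_congr rfl fun b _ => ?_
        rw [Finset.mul_sum, Finset.mul_sum, Finset.mul_sum, Finset.mul_sum]
        refine Finset.sum_congr rfl fun r _ => ?_
        have harg : (((a:ℂ)/d + ((b:ℂ) + d * q) * w' / ((d:ℂ) * w)) + r) / w'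
            = ((a:ℂ) * w + b * w' + d * (q * w' + r * w)) / ((d:ℂ) * w * w') := by
          field_simp
          ring
        rw [harg, hz]
        field_simp
        ring

theorem stmt4 {d : ℕ} (hd : 0 < d) (χ : DirichletCharacter ℂ d)
    (w₁ w₂ : ℕ) (hw₁ : 0 < w₁) (hw₂ : 0 < w₂) (ℓ : ℕ) :
    ∑ i ∈ Finset.range (ℓ + 1), (ℓ.choose i : ℂ) * genBernoulli χ i *
        charPowSum χ (ℓ - i) (d * w₁ - 1) * (w₁ : ℂ) ^ ((i : ℤ) - 1) * (w₂ : ℂ) ^ (ℓ - i) =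
      ∑ i ∈ Finset.range (ℓ + 1), (ℓ.choose i : ℂ) * genBernoulli χ i *
        charPowSum χ (ℓ - i) (d * w₂ - 1) * (w₂ : ℂ) ^ ((i : ℤ) - 1) * (w₁ : ℂ) ^ (ℓ - i) := by
  rw [main_lemma hd χ w₁ w₂ hw₁ hw₂ ℓ, main_lemma hd χ w₂ w₁ hw₂ hw₁ ℓ,
    show ((d:ℂ) * w₂ * w₁) = ((d:ℂ) * w₁ * w₂) by ring]
  congr 1
  calc ∑ a ∈ Finset.range d, ∑ q ∈ Finset.range w₁, ∑ b ∈ Finset.range d, ∑ r ∈ Finset.range w₂,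
        χ (a : ZMod d) * χ (b : ZMod d) *
          Polynomial.aeval (((a:ℂ) * w₁ + b * w₂ + d * (q * w₂ + r * w₁)) / ((d:ℂ) * w₁ * w₂))
            (Polynomial.bernoulli ℓ)
      = ∑ a ∈ Finset.range d, ∑ b ∈ Finset.range d, ∑ r ∈ Finset.range w₂, ∑ q ∈ Finset.range w₁,
        χ (a : ZMod d) * χ (b : ZMod d) *
          Polynomial.aeval (((a:ℂ) * w₁ + b * w₂ + d * (q * w₂ + r * w₁)) / ((d:ℂ) * w₁ * w₂))
            (Polynomial.bernoulli ℓ) := by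
        refine Finset.sum_congr rfl fun a _ => ?_
        rw [Finset.sum_comm]
        refine Finset.sum_congr rfl fun b _ => ?_
        rw [Finset.sum_comm]
    _ = ∑ b ∈ Finset.range d, ∑ a ∈ Finset.range d, ∑ r ∈ Finset.range w₂, ∑ q ∈ Finset.range w₁,
        χ (a : ZMod d) * χ (b : ZMod d) *
          Polynomial.aeval (((a:ℂ) * w₁ + b * w₂ + d * (q * w₂ + r * w₁)) / ((d:ℂ) * w₁ * w₂))
            (Polynomial.bernoulli ℓ) := Finset.sum_comm
    _ = ∑ b ∈ Finset.range d, ∑ r ∈ Finset.range w₂, ∑ a ∈ Finset.range d, ∑ q ∈ Finset.range w₁,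
        χ (a : ZMod d) * χ (b : ZMod d) *
          Polynomial.aeval (((a:ℂ) * w₁ + b * w₂ + d * (q * w₂ + r * w₁)) / ((d:ℂ) * w₁ * w₂))
            (Polynomial.bernoulli ℓ) := by
        refine Finset.sum_congr rfl fun b _ => ?_
        rw [Finset.sum_comm]
    _ = ∑ a ∈ Finset.range d, ∑ q ∈ Finset.range w₂, ∑ b ∈ Finset.range d, ∑ r ∈ Finset.range w₁,
        χ (a : ZMod d) * χ (b : ZMod d) *
          Polynomial.aeval (((a:ℂ) * w₂ + b * w₁ + d * (q * w₁ + r * w₂)) / ((d:ℂ) * w₁ * w₂))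
            (Polynomial.bernoulli ℓ) := by
        refine Finset.sum_congr rfl fun a _ => Finset.sum_congr rfl fun q _ =>
          Finset.sum_congr rfl fun b _ => Finset.sum_congr rfl fun r _ => ?_
        rw [show ((b:ℂ) * w₁ + a * w₂ + d * (r * w₂ + q * w₁)) / ((d:ℂ) * w₁ * w₂)
            = ((a:ℂ) * w₂ + b * w₁ + d * (q * w₁ + r * w₂)) / ((d:ℂ) * w₁ * w₂) by ring_nf]
        ring
end

section
/- Let χ be a Dirichlet character of conductor d. For all positive integers w₁, w₂ and k ≥ 0 and any rational x: w₁^{k-1} Σ_{i=0}^{d w₁ − 1} χ(i) B_{k,χ}(w₂ x + (w₂/w₁) i) = w₂^{k-1} Σ_{i=0}^{d w₂ − 1} χ(i) B_{k,χ}(w₁ x + (w₁/w₂) i). -/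
open Finset

section Raabe
open Polynomial

/-- A rational polynomial that is periodic under `x ↦ x + 1` is constant. -/
lemma periodic_poly_const (p : ℚ[X]) (h : ∀ x : ℚ, p.eval (x + 1) = p.eval x) :
    p = C (p.eval 0) := by
  have hn : ∀ n : ℕ, p.eval (n : ℚ) = p.eval 0 := by
    intro n
    induction n with
    | zero => simp
    | succ n ih => rw [Nat.cast_succ, h, ih]
  have hz : p - C (p.eval 0) = 0 := by
    apply eq_zero_of_infinite_isRoot
    apply Set.Infinite.mono (s := Set.range (Nat.cast : ℕ → ℚ))
    · rintro _ ⟨n, rfl⟩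
      simp [IsRoot, hn n]
    · exact Set.infinite_range_of_injective Nat.cast_injective
  linear_combination (norm := ring_nf) hz

noncomputable def PP (m k : ℕ) : ℚ[X] :=
  ∑ j ∈ range m, (Polynomial.bernoulli k).comp (C (m : ℚ)⁻¹ * (X + C (j : ℚ)))

lemma eval_PP (m k : ℕ) (x : ℚ) :
    (PP m k).eval x = ∑ j ∈ range m, (Polynomial.bernoulli k).eval ((m : ℚ)⁻¹ * (x + j)) := by
  rw [PP, eval_finset_sum]
  exact Finset.sum_congr rfl fun j _ => by simp [eval_comp]

noncomputable def GG (m k : ℕ) : ℚ[X] :=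
  C ((m : ℚ) ^ k) * PP m k - C (m : ℚ) * Polynomial.bernoulli k

lemma GG_periodic (m k : ℕ) (hm : 0 < m) (x : ℚ) :
    (GG m k).eval (x + 1) = (GG m k).eval x := by
  have hm0 : (m : ℚ) ≠ 0 := Nat.cast_ne_zero.mpr hm.ne'
  have hshift : (PP m k).eval (x + 1) = (PP m k).eval x + k * ((m : ℚ)⁻¹ * x) ^ (k - 1) := by
    rw [eval_PP, eval_PP]
    have h1 : ∀ j : ℕ, (m : ℚ)⁻¹ * (x + 1 + j) = (m : ℚ)⁻¹ * (x + (j + 1 : ℕ)) := by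
      intro j; push_cast; ring
    simp_rw [h1]
    set h : ℕ → ℚ := fun j => (Polynomial.bernoulli k).eval ((m : ℚ)⁻¹ * (x + j)) with hh
    have e1 := Finset.sum_range_succ' h m
    have e2 := Finset.sum_range_succ h m
    have hm' : h m = h 0 + k * ((m : ℚ)⁻¹ * x) ^ (k - 1) := by
      have : (m : ℚ)⁻¹ * (x + m) = 1 + (m : ℚ)⁻¹ * x := by field_simp; ring
      simp only [hh, this, Polynomial.bernoulli_eval_one_add, Nat.cast_zero, add_zero]
    have : ∑ j ∈ range m, h (j + 1) = ∑ j ∈ range m, h j + k * ((m : ℚ)⁻¹ * x) ^ (k - 1) := by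
      rw [← add_left_inj (h 0), ← e1, e2, hm']; ring
    exact this
  have hb : (Polynomial.bernoulli k).eval (x + 1)
      = (Polynomial.bernoulli k).eval x + k * x ^ (k - 1) := by
    rw [add_comm, Polynomial.bernoulli_eval_one_add]
  have hkey : (m : ℚ) ^ k * ((k : ℚ) * ((m : ℚ)⁻¹ * x) ^ (k - 1)) = (m : ℚ) * (k * x ^ (k - 1)) := by
    cases k with
    | zero => simp
    | succ n =>
      simp only [Nat.add_sub_cancel, mul_pow, pow_succ]
      field_simp
      rw [← mul_pow, mul_one_div_cancel hm0, one_pow, one_mul]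
  simp only [GG, eval_sub, eval_mul, eval_C, hshift, hb]
  ring_nf
  linear_combination (norm := ring_nf) hkey


lemma GG_deriv (m k : ℕ) (hm : 0 < m) :
    derivative (GG m (k + 1)) = C ((k : ℚ) + 1) * GG m k := by
  have hm0 : (m : ℚ) ≠ 0 := Nat.cast_ne_zero.mpr hm.ne'
  have hPP : derivative (PP m (k + 1)) = C (((k : ℚ) + 1) * (m : ℚ)⁻¹) * PP m k := by
    rw [PP, derivative_sum, PP, Finset.mul_sum]
    refine Finset.sum_congr rfl fun j _ => ?_
    rw [derivative_comp, Polynomial.derivative_bernoulli_add_one,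
      derivative_mul, derivative_C, derivative_add, derivative_X, derivative_C]
    simp only [add_comp, mul_comp, natCast_comp, one_comp, zero_mul, zero_add, add_zero, mul_one]
    rw [← C_eq_natCast, C_mul, C_add, C_1]
    ring
  rw [GG, GG, derivative_sub, derivative_mul, derivative_C, derivative_mul, derivative_C,
    hPP, Polynomial.derivative_bernoulli_add_one]
  have hpow : ((m : ℚ) ^ (k + 1)) * (((k : ℚ) + 1) * (m : ℚ)⁻¹) = ((k : ℚ) + 1) * (m : ℚ) ^ k := by
    rw [pow_succ]; field_simp
  have hc2 : ((k : ℚ[X]) + 1) = C ((k : ℚ) + 1) := by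
    rw [← C_eq_natCast, ← C_1, ← C_add]
  rw [hc2, ← mul_assoc, ← C_mul, hpow, C_mul]
  ring

lemma GG_eq_zero (m k : ℕ) (hm : 0 < m) : GG m k = 0 := by
  have hc := periodic_poly_const (GG m (k + 1)) (GG_periodic m (k + 1) hm)
  have hder : derivative (GG m (k + 1)) = 0 := by rw [hc]; simp
  rw [GG_deriv m k hm] at hder
  rcases mul_eq_zero.mp hder with h | h
  · exact absurd h (C_ne_zero.mpr (by positivity))
  · exact h

lemma raabeQ (m k : ℕ) (hm : 0 < m) (x : ℚ) :
    (m : ℚ) ^ k * ∑ j ∈ range m, (Polynomial.bernoulli k).eval ((m : ℚ)⁻¹ * (x + j)) =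
      (m : ℚ) * (Polynomial.bernoulli k).eval x := by
  have h := GG_eq_zero m k hm
  have := congrArg (Polynomial.eval x) h
  simpa [GG, eval_PP, sub_eq_zero] using this

lemma raabeC (m k : ℕ) (hm : 0 < m) (z : ℂ) :
    (m : ℂ) ^ k * ∑ j ∈ range m, Polynomial.aeval ((m : ℂ)⁻¹ * (z + j)) (Polynomial.bernoulli k) =
      (m : ℂ) * Polynomial.aeval z (Polynomial.bernoulli k) := by
  have h := GG_eq_zero m k hm
  have h2 : Polynomial.aeval z (GG m k) = 0 := by rw [h]; simp
  rw [GG, PP] at h2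
  simp only [map_sub, map_mul, map_sum, aeval_C, aeval_comp, map_add, aeval_X] at h2
  push_cast at h2
  rw [sub_eq_zero] at h2
  rw [h2]

lemma sum_range_mul_index {M : Type*} [AddCommMonoid M] (d v : ℕ) (F : ℕ → M) :
    ∑ b ∈ range (d * v), F b = ∑ j ∈ range v, ∑ a ∈ range d, F (a + d * j) := by
  induction v with
  | zero => simp
  | succ v ih =>
    rw [Finset.sum_range_succ, ← ih, Nat.mul_succ, Finset.sum_range_add]
    congr 1
    exact Finset.sum_congr rfl fun a _ => by rw [Nat.add_comm]

lemma key {d : ℕ} (hd : 0 < d) (χ : DirichletCharacter ℂ d) (k : ℕ) (x : ℚ)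
    (w v : ℕ) (hw : 0 < w) (hv : 0 < v) :
    (w : ℂ) ^ ((k : ℤ) - 1) * ∑ i ∈ Finset.range (d * w),
        χ (i : ZMod d) * genBernoulliPoly χ k ((v : ℂ) * (x : ℂ) + (v : ℂ) / w * i) =
    ((d : ℂ) ^ ((k : ℤ) - 1) * (w : ℂ) ^ ((k : ℤ) - 1) * (v : ℂ) ^ ((k : ℤ) - 1)) *
      ∑ i ∈ Finset.range (d * w), ∑ b ∈ Finset.range (d * v),
        χ (i : ZMod d) * χ (b : ZMod d) *
          Polynomial.aeval ((x : ℂ) / d + (i : ℂ) / ((d : ℂ) * w) + (b : ℂ) / ((d : ℂ) * v))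
            (Polynomial.bernoulli k) := by
  have hd0 : (d : ℂ) ≠ 0 := Nat.cast_ne_zero.mpr hd.ne'
  have hw0 : (w : ℂ) ≠ 0 := Nat.cast_ne_zero.mpr hw.ne'
  have hv0 : (v : ℂ) ≠ 0 := Nat.cast_ne_zero.mpr hv.ne'
  have hvz : (v : ℂ) ^ ((k : ℤ) - 1) = (v : ℂ) ^ k * (v : ℂ)⁻¹ := by
    rw [zpow_sub₀ hv0, zpow_natCast, zpow_one, div_eq_mul_inv]
  have hinner : ∀ i : ℕ,
      (∑ a ∈ Finset.range d, χ (a : ZMod d) *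
          Polynomial.aeval (((a : ℂ) + ((v : ℂ) * (x : ℂ) + (v : ℂ) / w * i)) / d)
            (Polynomial.bernoulli k))
      = (v : ℂ) ^ ((k : ℤ) - 1) * ∑ b ∈ Finset.range (d * v),
          χ (b : ZMod d) *
            Polynomial.aeval ((x : ℂ) / d + (i : ℂ) / ((d : ℂ) * w) + (b : ℂ) / ((d : ℂ) * v))
              (Polynomial.bernoulli k) := by
    intro i
    rw [sum_range_mul_index d v, Finset.sum_comm, Finset.mul_sum]
    refine Finset.sum_congr rfl fun a _ => ?_
    have hr := raabeC v k hv (((a : ℂ) + ((v : ℂ) * (x : ℂ) + (v : ℂ) / w * i)) / d)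
    have harg : ∀ j : ℕ,
        (v : ℂ)⁻¹ * ((((a : ℂ) + ((v : ℂ) * (x : ℂ) + (v : ℂ) / w * i)) / d) + j)
          = (x : ℂ) / d + (i : ℂ) / ((d : ℂ) * w) + (((a + d * j : ℕ) : ℂ)) / ((d : ℂ) * v) := by
      intro j; push_cast; field_simp; ring
    simp_rw [harg] at hr
    have hcast : ∀ j : ℕ, χ (((a + d * j : ℕ) : ZMod d)) = χ (a : ZMod d) := by
      intro j; congr 1; push_cast; simp [ZMod.natCast_self]
    simp_rw [hcast, hvz]
    rw [← Finset.mul_sum]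
    set A := (Polynomial.aeval (((a : ℂ) + ((v : ℂ) * (x : ℂ) + (v : ℂ) / w * i)) / d))
      (Polynomial.bernoulli k) with hA
    set S := ∑ j ∈ Finset.range v,
      (Polynomial.aeval ((x : ℂ) / d + (i : ℂ) / ((d : ℂ) * w) + (((a + d * j : ℕ) : ℂ)) / ((d : ℂ) * v)))
        (Polynomial.bernoulli k) with hS
    have hvv : (v : ℂ) * (v : ℂ)⁻¹ = 1 := mul_inv_cancel₀ hv0
    linear_combination (-(χ (a : ZMod d) * (v : ℂ)⁻¹)) * hr - (χ (a : ZMod d) * A) * hvv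
  simp only [genBernoulliPoly]
  rw [Finset.mul_sum, Finset.mul_sum]
  refine Finset.sum_congr rfl fun i _ => ?_
  rw [hinner i]
  simp only [Finset.mul_sum]
  refine Finset.sum_congr rfl fun b _ => ?_
  ring

end Raabe

theorem stmt5 {d : ℕ} (hd : 0 < d) (χ : DirichletCharacter ℂ d)
    (w₁ w₂ : ℕ) (hw₁ : 0 < w₁) (hw₂ : 0 < w₂) (k : ℕ) (x : ℚ) :
    (w₁ : ℂ) ^ ((k : ℤ) - 1) * ∑ i ∈ Finset.range (d * w₁),
        χ (i : ZMod d) * genBernoulliPoly χ k ((w₂ : ℂ) * (x : ℂ) + (w₂ : ℂ) / w₁ * i) =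
      (w₂ : ℂ) ^ ((k : ℤ) - 1) * ∑ i ∈ Finset.range (d * w₂),
        χ (i : ZMod d) * genBernoulliPoly χ k ((w₁ : ℂ) * (x : ℂ) + (w₁ : ℂ) / w₂ * i) := by
  rw [key hd χ k x w₁ w₂ hw₁ hw₂, key hd χ k x w₂ w₁ hw₂ hw₁, Finset.sum_comm]
  congr 1
  · ring
  · refine Finset.sum_congr rfl fun i _ => Finset.sum_congr rfl fun b _ => ?_
    rw [mul_comm (χ (b : ZMod d)) (χ (i : ZMod d)),
      show (x : ℂ) / d + (b : ℂ) / ((d : ℂ) * w₁) + (i : ℂ) / ((d : ℂ) * w₂)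
        = (x : ℂ) / d + (i : ℂ) / ((d : ℂ) * w₂) + (b : ℂ) / ((d : ℂ) * w₁) by ring]
end

section
/- Let χ be a Dirichlet character of conductor d. For every positive integer w and every k ≥ 0: w^{k-1} Σ_{i=0}^{d w − 1} χ(i) B_{k,χ}(i/w) = Σ_{i=0}^{d-1} χ(i) B_{k,χ}(w i). -/
open Finset

section RaabeAux

open PowerSeries

private noncomputable def BserAux (x : ℂ) : ℂ⟦X⟧ :=
  PowerSeries.mk fun n => Polynomial.aeval x ((1 / n.factorial : ℚ) • Polynomial.bernoulli n)

private lemma BserAux_mul (x : ℂ) :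
    BserAux x * (exp ℂ - 1) = PowerSeries.X * rescale x (exp ℂ) :=
  Polynomial.bernoulli_generating_function x

private lemma raabe_series_aux (w : ℕ) (hw : 0 < w) (x : ℂ) :
    ∑ s ∈ range w, BserAux (x + (s : ℂ) / w) =
      PowerSeries.C (w : ℂ) * rescale ((w : ℂ)⁻¹) (BserAux ((w : ℂ) * x)) := by
  have hw0 : (w : ℂ) ≠ 0 := Nat.cast_ne_zero.mpr hw.ne'
  have hexp : (exp ℂ - 1) ≠ 0 := fun h => by
    simpa [coeff_exp] using congrArg (PowerSeries.coeff 1) h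
  apply mul_right_cancel₀ hexp
  set E := rescale ((w : ℂ)⁻¹) (exp ℂ) with hE
  have hEs : ∀ s : ℕ, E ^ s = rescale ((s : ℂ) / w) (exp ℂ) := by
    intro s
    rw [hE, ← map_pow, exp_pow_eq_rescale_exp, rescale_rescale, ← div_eq_mul_inv]
  have hEw : E ^ w = exp ℂ := by
    rw [hEs w, div_self hw0, rescale_one, RingHom.id_apply]
  have hgeom : (E - 1) * ∑ s ∈ range w, E ^ s = exp ℂ - 1 := by
    rw [mul_geom_sum, hEw]
  have key : rescale ((w : ℂ)⁻¹) (BserAux ((w : ℂ) * x)) * (E - 1) =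
      PowerSeries.C ((w : ℂ)⁻¹) * (PowerSeries.X * rescale x (exp ℂ)) := by
    have h := congrArg (rescale ((w : ℂ)⁻¹)) (BserAux_mul ((w : ℂ) * x))
    rw [map_mul, map_sub, map_one, map_mul, rescale_X, rescale_rescale] at h
    rw [← hE] at h
    have hx : ((w : ℂ) * x * (w : ℂ)⁻¹) = x := by field_simp
    rw [h, hx, mul_assoc]
  calc (∑ s ∈ range w, BserAux (x + (s : ℂ) / w)) * (exp ℂ - 1)
      = PowerSeries.X * rescale x (exp ℂ) * ∑ s ∈ range w, E ^ s := by
        rw [Finset.sum_mul, Finset.mul_sum]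
        refine Finset.sum_congr rfl fun s _ => ?_
        rw [BserAux_mul, hEs, mul_assoc, exp_mul_exp_eq_exp_add]
    _ = PowerSeries.C (w : ℂ) * rescale ((w : ℂ)⁻¹) (BserAux ((w : ℂ) * x)) *
          (exp ℂ - 1) := by
        rw [← hgeom, ← mul_assoc, mul_assoc (PowerSeries.C (w : ℂ)), key,
          ← mul_assoc, ← map_mul, mul_inv_cancel₀ hw0, map_one, one_mul, mul_assoc]

/-- Raabe's multiplication theorem for Bernoulli polynomials. -/
private lemma raabe_aux (w : ℕ) (hw : 0 < w) (k : ℕ) (x : ℂ) :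
    Polynomial.aeval ((w : ℂ) * x) (Polynomial.bernoulli k) =
      (w : ℂ) ^ ((k : ℤ) - 1) *
        ∑ s ∈ range w, Polynomial.aeval (x + (s : ℂ) / w) (Polynomial.bernoulli k) := by
  have hw0 : (w : ℂ) ≠ 0 := Nat.cast_ne_zero.mpr hw.ne'
  have h := congrArg (PowerSeries.coeff k) (raabe_series_aux w hw x)
  rw [map_sum, PowerSeries.coeff_C_mul, coeff_rescale] at h
  simp only [BserAux, coeff_mk, map_smul] at h
  have hfac : ((1 / k.factorial : ℚ) : ℂ) ≠ 0 := by
    simp [Nat.factorial_ne_zero]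
  rw [Rat.smul_def] at h
  simp only [Rat.smul_def, ← Finset.sum_mul] at h
  rw [← Finset.mul_sum] at h
  have h2 : ∑ s ∈ range w, Polynomial.aeval (x + (s : ℂ) / w) (Polynomial.bernoulli k) =
      (w : ℂ) * ((w : ℂ)⁻¹ ^ k * Polynomial.aeval ((w : ℂ) * x) (Polynomial.bernoulli k)) := by
    apply mul_left_cancel₀ hfac
    rw [h]; ring
  have hz : (w : ℂ) ^ ((k : ℤ) - 1) = (w : ℂ) ^ k * (w : ℂ)⁻¹ := by
    rw [zpow_sub₀ hw0, zpow_natCast, zpow_one, div_eq_mul_inv]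
  rw [hz, h2]
  field_simp
  rw [mul_assoc, ← mul_pow, one_div, mul_inv_cancel₀ hw0, one_pow, mul_one]

end RaabeAux

private noncomputable def bernEval (k : ℕ) (y : ℂ) : ℂ :=
  Polynomial.aeval y (Polynomial.bernoulli k)

private lemma reindex_aux {d w : ℕ} (hd : 0 < d) (F : ℕ → ℂ) :
    ∑ i ∈ Finset.range (d * w), F i =
      ∑ r ∈ Finset.range d, ∑ t ∈ Finset.range w, F (r + d * t) := by
  rw [← Finset.sum_product']
  refine Finset.sum_nbij' (fun n => (n % d, n / d)) (fun p => p.1 + d * p.2) ?_ ?_ ?_ ?_ ?_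
  · intro n hn
    rw [Finset.mem_range] at hn
    rw [Finset.mem_product, Finset.mem_range, Finset.mem_range]
    exact ⟨Nat.mod_lt _ hd, Nat.div_lt_of_lt_mul hn⟩
  · intro p hp
    rw [Finset.mem_product, Finset.mem_range, Finset.mem_range] at hp
    rw [Finset.mem_range]
    calc p.1 + d * p.2 < d + d * p.2 := Nat.add_lt_add_right hp.1 _
      _ = d * (p.2 + 1) := by ring
      _ ≤ d * w := Nat.mul_le_mul_left d hp.2
  · intro n _
    exact Nat.mod_add_div n d
  · intro p hp
    rw [Finset.mem_product, Finset.mem_range, Finset.mem_range] at hp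
    ext
    · simp [Nat.add_mul_mod_self_left, Nat.mod_eq_of_lt hp.1]
    · simp [Nat.add_mul_div_left _ _ hd, Nat.div_eq_of_lt hp.1]
  · intro n _
    rw [Nat.mod_add_div n d]

theorem stmt7 {d : ℕ} (hd : 0 < d) (χ : DirichletCharacter ℂ d)
    (w : ℕ) (hw : 0 < w) (k : ℕ) :
    (w : ℂ) ^ ((k : ℤ) - 1) * ∑ i ∈ Finset.range (d * w),
        χ (i : ZMod d) * genBernoulliPoly χ k ((i : ℂ) / w) =
      ∑ i ∈ Finset.range d, χ (i : ZMod d) * genBernoulliPoly χ k ((w : ℂ) * i) := by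
  have hd0 : (d : ℂ) ≠ 0 := Nat.cast_ne_zero.mpr hd.ne'
  have hw0 : (w : ℂ) ≠ 0 := Nat.cast_ne_zero.mpr hw.ne'
  -- Left-hand side as a triple sum
  have hL : ∑ i ∈ Finset.range (d * w), χ (i : ZMod d) * genBernoulliPoly χ k ((i : ℂ) / w)
      = (d : ℂ) ^ ((k : ℤ) - 1) * ∑ r ∈ Finset.range d, ∑ t ∈ Finset.range w,
          ∑ a ∈ Finset.range d, χ (r : ZMod d) * χ (a : ZMod d) *
            bernEval k ((a : ℂ) / d + (r : ℂ) / (d * w) + (t : ℂ) / w) := by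
    rw [reindex_aux hd]
    rw [Finset.mul_sum]
    refine Finset.sum_congr rfl fun r hr => ?_
    rw [Finset.mul_sum]
    refine Finset.sum_congr rfl fun t ht => ?_
    have hχ : ((r + d * t : ℕ) : ZMod d) = (r : ZMod d) := by
      push_cast [ZMod.natCast_self]
      ring
    rw [hχ, genBernoulliPoly, mul_left_comm]
    congr 1
    rw [Finset.mul_sum]
    refine Finset.sum_congr rfl fun a ha => ?_
    rw [← mul_assoc]
    congr 1
    show bernEval k (((a : ℂ) + ((r + d * t : ℕ) : ℂ) / w) / d) = _
    congr 1
    push_cast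
    field_simp
    ring
  -- Right-hand side as a triple sum
  have hR : ∑ i ∈ Finset.range d, χ (i : ZMod d) * genBernoulliPoly χ k ((w : ℂ) * i)
      = (d : ℂ) ^ ((k : ℤ) - 1) * ((w : ℂ) ^ ((k : ℤ) - 1) *
          ∑ j ∈ Finset.range d, ∑ a ∈ Finset.range d, ∑ s ∈ Finset.range w,
            χ (j : ZMod d) * χ (a : ZMod d) *
              bernEval k ((a : ℂ) / (d * w) + (j : ℂ) / d + (s : ℂ) / w)) := by
    rw [Finset.mul_sum, Finset.mul_sum]
    refine Finset.sum_congr rfl fun j hj => ?_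
    rw [genBernoulliPoly, mul_left_comm]
    congr 1
    rw [Finset.mul_sum, Finset.mul_sum]
    refine Finset.sum_congr rfl fun a ha => ?_
    have harg : (((a : ℂ) + (w : ℂ) * j) / d) =
        (w : ℂ) * ((a : ℂ) / (d * w) + (j : ℂ) / d) := by
      field_simp
    have : bernEval k ((w : ℂ) * ((a : ℂ) / (d * w) + (j : ℂ) / d)) =
        (w : ℂ) ^ ((k : ℤ) - 1) * ∑ s ∈ Finset.range w,
          bernEval k ((a : ℂ) / (d * w) + (j : ℂ) / d + (s : ℂ) / w) :=
      raabe_aux w hw k ((a : ℂ) / (d * w) + (j : ℂ) / d)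
    rw [show (Polynomial.aeval (((a : ℂ) + (w : ℂ) * j) / (d : ℂ)) (Polynomial.bernoulli k)) =
        bernEval k ((w : ℂ) * ((a : ℂ) / (d * w) + (j : ℂ) / d)) from by rw [bernEval, harg], this]
    simp only [Finset.mul_sum]
    refine Finset.sum_congr rfl fun s hs => ?_
    ring
  rw [hL, hR]
  rw [mul_left_comm]
  congr 1
  rw [Finset.mul_sum]
  rw [← Finset.mul_sum]
  congr 1
  -- now the combinatorial identity between the two triple sums
  calc ∑ r ∈ Finset.range d, ∑ t ∈ Finset.range w, ∑ a ∈ Finset.range d,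
        χ (r : ZMod d) * χ (a : ZMod d) * bernEval k ((a : ℂ) / d + (r : ℂ) / (d * w) + (t : ℂ) / w)
      = ∑ r ∈ Finset.range d, ∑ a ∈ Finset.range d, ∑ t ∈ Finset.range w,
        χ (r : ZMod d) * χ (a : ZMod d) * bernEval k ((a : ℂ) / d + (r : ℂ) / (d * w) + (t : ℂ) / w) :=
        Finset.sum_congr rfl fun r _ => Finset.sum_comm
    _ = ∑ a ∈ Finset.range d, ∑ r ∈ Finset.range d, ∑ t ∈ Finset.range w,
        χ (r : ZMod d) * χ (a : ZMod d) * bernEval k ((a : ℂ) / d + (r : ℂ) / (d * w) + (t : ℂ) / w) :=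
        Finset.sum_comm
    _ = ∑ j ∈ Finset.range d, ∑ a ∈ Finset.range d, ∑ s ∈ Finset.range w,
        χ (j : ZMod d) * χ (a : ZMod d) * bernEval k ((a : ℂ) / (d * w) + (j : ℂ) / d + (s : ℂ) / w) := by
        refine Finset.sum_congr rfl fun a _ => Finset.sum_congr rfl fun r _ =>
          Finset.sum_congr rfl fun t _ => ?_
        rw [mul_comm (χ (a : ZMod d)) (χ (r : ZMod d))]
        congr 2
        ring
end

section
/- For all positive integers w₁, w₂ and every k ≥ 0 and rational x: w₁^{k-1} Σ_{i=0}^{w₁−1} B_k(w₂ x + (w₂/w₁) i) = w₂^{k-1} Σ_{i=0}^{w₂−1} B_k(w₁ x + (w₁/w₂) i). (This is the d = 1, trivial character case of Theorem 3.) -/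
open Polynomial Finset

private lemma bern_eval_nat_add (p : ℕ) (a : ℚ) (N : ℕ) :
    (Polynomial.bernoulli (p+1)).eval ((N : ℚ) + a) =
      (Polynomial.bernoulli (p+1)).eval a + (p+1) * ∑ q ∈ range N, (a + q)^p := by
  induction N with
  | zero => simp
  | succ N ih =>
    have h : ((N+1 : ℕ) : ℚ) + a = 1 + ((N:ℚ) + a) := by push_cast; ring
    rw [h, bernoulli_eval_one_add, ih, sum_range_succ]
    push_cast [Nat.add_sub_cancel]
    ring

private lemma double_count (n N p : ℕ) :
    ∑ m ∈ range (n * N), (m:ℚ)^p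
      = ∑ i ∈ range n, ∑ q ∈ range N, ((n*q + i : ℕ):ℚ)^p := by
  induction N with
  | zero => simp
  | succ N ih =>
    rw [Nat.mul_succ, sum_range_add, ih]
    simp_rw [sum_range_succ, sum_add_distrib]

private noncomputable def Qp (n p : ℕ) : ℚ[X] :=
  (∑ i ∈ range n, (Polynomial.bernoulli p).comp (X + C ((i:ℚ)/n))) -
    C ((n:ℚ)^((1:ℤ) - p)) * (Polynomial.bernoulli p).comp (C (n:ℚ) * X)

private lemma Qp_eval (n p : ℕ) (x : ℚ) :
    (Qp n p).eval x = (∑ i ∈ range n, (Polynomial.bernoulli p).eval (x + (i:ℚ)/n)) -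
      (n:ℚ)^((1:ℤ) - p) * (Polynomial.bernoulli p).eval ((n:ℚ) * x) := by
  simp [Qp, eval_finset_sum]

private lemma Qp_eval_nat (n p : ℕ) (hn : 0 < n) (N : ℕ) :
    (Qp n (p+1)).eval (N : ℚ) = (Qp n (p+1)).eval 0 := by
  have hn' : (n:ℚ) ≠ 0 := by positivity
  rw [Qp_eval, Qp_eval]
  have h1 : ∀ i ∈ range n, (Polynomial.bernoulli (p+1)).eval ((N:ℚ) + (i:ℚ)/n)
      = (Polynomial.bernoulli (p+1)).eval ((i:ℚ)/n) + (p+1) * ∑ q ∈ range N, ((i:ℚ)/n + q)^p :=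
    fun i _ => bern_eval_nat_add p _ N
  have h2 : (Polynomial.bernoulli (p+1)).eval ((n:ℚ) * N)
      = (Polynomial.bernoulli (p+1)).eval 0 + (p+1) * ∑ m ∈ range (n*N), ((0:ℚ) + (m:ℚ))^p := by
    have := bern_eval_nat_add p 0 (n*N)
    rw [← this]
    norm_num [Nat.cast_mul]
  simp only [zero_add] at h2
  rw [sum_congr rfl h1, h2, double_count]
  simp only [zero_add, mul_zero]
  have h3 : ∀ i ∈ range n, ∀ q ∈ range N, ((n*q + i : ℕ):ℚ)^p = (n:ℚ)^p * ((i:ℚ)/n + q)^p := by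
    intro i _ q _
    rw [← mul_pow]
    congr 1
    push_cast
    field_simp
    ring
  have h4 : ∑ i ∈ range n, ∑ q ∈ range N, ((n*q + i : ℕ):ℚ)^p
      = (n:ℚ)^p * ∑ i ∈ range n, ∑ q ∈ range N, ((i:ℚ)/n + q)^p := by
    rw [mul_sum]
    refine sum_congr rfl fun i hi => ?_
    rw [mul_sum]
    exact sum_congr rfl fun q hq => h3 i hi q hq
  have h5 : (n:ℚ)^((1:ℤ) - (p+1:ℕ)) * (n:ℚ)^p = 1 := by
    push_cast
    rw [← zpow_natCast (n:ℚ) p, ← zpow_add₀ hn']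
    norm_num
  rw [h4, sum_add_distrib]
  rw [mul_add]
  rw [← mul_assoc, mul_comm ((n:ℚ)^((1:ℤ) - ((p:ℕ)+1:ℕ))) ((p:ℚ)+1), mul_assoc, ← mul_assoc ((n:ℚ)^((1:ℤ) - ((p:ℕ)+1:ℕ))), h5, one_mul, ← mul_sum]
  push_cast
  ring

private lemma Qp_succ_const (n p : ℕ) (hn : 0 < n) :
    Qp n (p+1) = C ((Qp n (p+1)).eval 0) := by
  have h : Qp n (p+1) - C ((Qp n (p+1)).eval 0) = 0 := by
    apply eq_zero_of_infinite_isRoot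
    apply Set.infinite_of_injective_forall_mem (f := (Nat.cast : ℕ → ℚ)) Nat.cast_injective
    intro N
    simp only [Set.mem_setOf_eq, IsRoot, eval_sub, eval_C, Qp_eval_nat n p hn N, sub_self]
  linear_combination (norm := ring_nf) h

private lemma Qp_derivative (n p : ℕ) (hn : 0 < n) :
    derivative (Qp n (p+1)) = ((p:ℚ[X]) + 1) * Qp n p := by
  have hn' : (n:ℚ) ≠ 0 := by positivity
  have hz : (n:ℚ)^((1:ℤ) - (p+1:ℕ)) * (n:ℚ) = (n:ℚ)^((1:ℤ) - p) := by
    rw [show ((1:ℤ) - (p+1:ℕ)) = ((1:ℤ) - p) - 1 by push_cast; ring, zpow_sub_one₀ hn',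
      mul_assoc, inv_mul_cancel₀ hn', mul_one]
  simp only [Qp, derivative_sub, derivative_sum, derivative_comp, derivative_mul,
    derivative_C, derivative_X, derivative_add, zero_mul, zero_add,
    Polynomial.derivative_bernoulli_add_one, mul_one, mul_zero]
  rw [mul_sub, mul_sum]
  congr 1
  · refine sum_congr rfl fun i _ => ?_
    simp only [mul_comp, add_comp, natCast_comp, one_comp]
    ring
  · simp only [mul_comp, add_comp, natCast_comp, one_comp]
    rw [← hz, C_mul]
    ring

private lemma Qp_eq_zero (n p : ℕ) (hn : 0 < n) : Qp n p = 0 := by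
  have h := Qp_derivative n p hn
  rw [Qp_succ_const n p hn, derivative_C] at h
  have hne : ((p:ℚ[X]) + 1) ≠ 0 := by
    have h2 : ((p+1:ℕ) : ℚ[X]) ≠ 0 := Nat.cast_ne_zero.mpr p.succ_ne_zero
    push_cast at h2
    exact h2
  exact (mul_eq_zero.1 h.symm).resolve_left hne

private lemma raabe_s12 (n p : ℕ) (hn : 0 < n) (x : ℚ) :
    ∑ i ∈ range n, (Polynomial.bernoulli p).eval (x + (i:ℚ)/n)
      = (n:ℚ)^((1:ℤ) - p) * (Polynomial.bernoulli p).eval ((n:ℚ) * x) := by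
  have h := congrArg (eval x) (Qp_eq_zero n p hn)
  rw [Qp_eval, eval_zero, sub_eq_zero] at h
  exact h

theorem stmt12 (w₁ w₂ : ℕ) (hw₁ : 0 < w₁) (hw₂ : 0 < w₂) (k : ℕ) (x : ℚ) :
    (w₁ : ℚ) ^ ((k : ℤ) - 1) * ∑ i ∈ Finset.range w₁,
        (Polynomial.bernoulli k).eval ((w₂ : ℚ) * x + (w₂ : ℚ) / w₁ * i) =
      (w₂ : ℚ) ^ ((k : ℤ) - 1) * ∑ i ∈ Finset.range w₂,
        (Polynomial.bernoulli k).eval ((w₁ : ℚ) * x + (w₁ : ℚ) / w₂ * i) := by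
  have key : ∀ a b : ℕ, 0 < a → 0 < b →
      (a : ℚ) ^ ((k : ℤ) - 1) * ∑ i ∈ Finset.range a,
          (Polynomial.bernoulli k).eval ((b : ℚ) * x + (b : ℚ) / a * i)
        = (a : ℚ) ^ ((k : ℤ) - 1) * (b : ℚ) ^ ((k : ℤ) - 1) *
            ∑ i ∈ Finset.range a, ∑ j ∈ Finset.range b,
              (Polynomial.bernoulli k).eval (x + (i:ℚ)/a + (j:ℚ)/b) := by
    intro a b ha hb
    have hb' : (b:ℚ) ≠ 0 := by positivity
    have hbp : (b:ℚ) ^ ((k:ℤ) - 1) * (b:ℚ) ^ ((1:ℤ) - k) = 1 := by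
      rw [← zpow_add₀ hb']
      norm_num
    have inner : ∀ i : ℕ, (Polynomial.bernoulli k).eval ((b:ℚ) * x + (b:ℚ) / a * i)
        = (b:ℚ) ^ ((k:ℤ) - 1) * ∑ j ∈ Finset.range b,
            (Polynomial.bernoulli k).eval (x + (i:ℚ)/a + (j:ℚ)/b) := by
      intro i
      have h := raabe_s12 b k hb (x + (i:ℚ)/a)
      have harg : (b:ℚ) * x + (b:ℚ) / a * i = (b:ℚ) * (x + (i:ℚ)/a) := by ring
      rw [harg, h, ← mul_assoc, hbp, one_mul]
    rw [Finset.sum_congr rfl fun i _ => inner i, ← Finset.mul_sum]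
    ring
  rw [key w₁ w₂ hw₁ hw₂, key w₂ w₁ hw₂ hw₁,
    mul_comm ((w₂:ℚ) ^ ((k:ℤ) - 1)) ((w₁:ℚ) ^ ((k:ℤ) - 1))]
  congr 1
  rw [Finset.sum_comm]
  exact Finset.sum_congr rfl fun j _ => Finset.sum_congr rfl fun i _ => by
    rw [add_right_comm]
end

section
/- For the p-adic invariant integral I(f) = lim_{N→∞} p^{-N} Σ_{x=0}^{p^N−1} f(x) applied to the monomial f(x) = x^n (n ≥ 0), one has I(x^n) = B_n, the n-th Bernoulli number. -/
theorem stmt19 (p : ℕ) [Fact p.Prime] (n : ℕ) :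
    Filter.Tendsto
      (fun N : ℕ => (p : ℚ_[p]) ^ (-(N : ℤ)) * ∑ x ∈ Finset.range (p ^ N), (x : ℚ_[p]) ^ n)
      Filter.atTop (nhds ((bernoulli n : ℚ) : ℚ_[p])) := by
  have hpp : p.Prime := Fact.out
  have hp0 : (p : ℚ_[p]) ≠ 0 := by
    exact_mod_cast (Nat.cast_ne_zero (R := ℚ_[p])).mpr hpp.ne_zero
  have key : ∀ N : ℕ,
      (p : ℚ_[p]) ^ (-(N : ℤ)) * ∑ x ∈ Finset.range (p ^ N), (x : ℚ_[p]) ^ n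
        = ∑ i ∈ Finset.range (n + 1),
            ((bernoulli i * ((n + 1).choose i) / (n + 1) : ℚ) : ℚ_[p]) * ((p : ℚ_[p]) ^ (n - i)) ^ N := by
    intro N
    have h1 : ∑ x ∈ Finset.range (p ^ N), (x : ℚ_[p]) ^ n
        = ((∑ i ∈ Finset.range (n + 1),
            bernoulli i * ((n + 1).choose i) * ((p ^ N : ℕ) : ℚ) ^ (n + 1 - i) / (n + 1) : ℚ) : ℚ_[p]) := by
      rw [← sum_range_pow]
      push_cast
      ring
    rw [h1]
    push_cast
    rw [Finset.mul_sum]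
    refine Finset.sum_congr rfl fun i hi => ?_
    have hin : i ≤ n := Nat.lt_succ_iff.mp (Finset.mem_range.mp hi)
    have hsub : n + 1 - i = (n - i) + 1 := by omega
    rw [hsub]
    have hz : (p : ℚ_[p]) ^ (-(N : ℤ)) = ((p : ℚ_[p]) ^ N)⁻¹ := by
      rw [← zpow_natCast (p : ℚ_[p]) N, ← zpow_neg]
    rw [hz, pow_succ, ← pow_mul, ← pow_mul, Nat.mul_comm N (n - i)]
    have hpN : (p : ℚ_[p]) ^ N ≠ 0 := pow_ne_zero _ hp0
    have hn1 : ((n : ℚ_[p]) + 1) ≠ 0 := by exact Nat.cast_add_one_ne_zero n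
    field_simp
  rw [Filter.tendsto_congr key]
  have hlim : Filter.Tendsto
      (fun N : ℕ => ∑ i ∈ Finset.range (n + 1),
          ((bernoulli i * ((n + 1).choose i) / (n + 1) : ℚ) : ℚ_[p]) * ((p : ℚ_[p]) ^ (n - i)) ^ N)
      Filter.atTop (nhds (∑ i ∈ Finset.range (n + 1),
          (if i = n then ((bernoulli n : ℚ) : ℚ_[p]) else 0))) := by
    refine tendsto_finset_sum _ fun i hi => ?_
    have hin : i ≤ n := Nat.lt_succ_iff.mp (Finset.mem_range.mp hi)
    rcases eq_or_lt_of_le hin with h | h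
    · subst h
      simp only [if_pos rfl, Nat.sub_self, pow_zero, one_pow, mul_one]
      have hq : (bernoulli i * ((i + 1).choose i) / (i + 1) : ℚ) = bernoulli i := by
        rw [Nat.choose_succ_self_right]
        have h1 : ((i : ℚ) + 1) ≠ 0 := by positivity
        push_cast
        field_simp
      rw [hq]
      exact tendsto_const_nhds
    · rw [if_neg h.ne]
      have hnorm : ‖(p : ℚ_[p]) ^ (n - i)‖ < 1 := by
        rw [norm_pow]
        have h1 : ‖(p : ℚ_[p])‖ < 1 := Padic.norm_p_lt_one
        have h0 : ‖(p : ℚ_[p])‖ ≥ 0 := norm_nonneg _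
        calc ‖(p : ℚ_[p])‖ ^ (n - i) ≤ ‖(p : ℚ_[p])‖ ^ 1 := by
              apply pow_le_pow_of_le_one h0 h1.le; omega
          _ < 1 := by simpa using h1
      have := tendsto_pow_atTop_nhds_zero_of_norm_lt_one hnorm
      simpa using this.const_mul _
  simpa [Finset.sum_ite_eq' (Finset.range (n+1)) n] using hlim
end
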